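/- Let k be a nonnegative integer with k ≥ 2, Ω ⊆ ℝ a nonempty open set, and D : C^k(Ω) → C(Ω) a linear operator (additive and ℝ-homogeneous) satisfying D(f³) − 3·f·D(f²) + 3·f²·D(f) = 0 for all f ∈ C^k(Ω), where f² and f³ denote pointwise powers. Then there exist continuous functions c₁, c₂ : Ω → ℝ such that D(f)(x) = c₁(x)·f'(x) + c₂(x)·f''(x) for all f ∈ C^k(Ω) and x ∈ Ω. Moreover, if k = 0 then D = 0, and if k = 1 then D(f)(x) = c₁(x)·f'(x) for some continuous c₁. -/

import Mathlib

open Real Set Filter Topology Asymptotics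

private lemma aux_deriv_monomial (a c : ℝ) (m : ℕ) :
    deriv (fun y : ℝ => a * (y - c) ^ m) = fun y : ℝ => (a * m) * (y - c) ^ (m - 1) := by
  funext y
  cases m with
  | zero => simp
  | succ m =>
    have h : HasDerivAt (fun y : ℝ => a * (y - c) ^ (m+1))
        (a * (((m+1 : ℕ)) * (y - c) ^ (m + 1 - 1) * 1)) y :=
      (((hasDerivAt_id y).sub_const c).pow (m+1)).const_mul a
    rw [h.deriv]; push_cast; ring_nf

private lemma aux_contDiffOn_iter {Ω : Set ℝ} (hΩ : IsOpen Ω) {k : ℕ} {f : ℝ → ℝ}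
    (hf : ContDiffOn ℝ k f Ω) : ∀ i ≤ k, ContDiffOn ℝ (↑(k - i)) (deriv^[i] f) Ω := by
  induction k generalizing f with
  | zero => intro i hi; interval_cases i; simpa using hf
  | succ k ih =>
    intro i hi
    cases i with
    | zero => simpa using hf
    | succ i =>
      rw [Function.iterate_succ_apply]
      have h1 : ContDiffOn ℝ (↑k) (deriv f) Ω := by
        apply hf.deriv_of_isOpen hΩ
        exact_mod_cast le_of_eq (by push_cast; ring)
      have := ih h1 i (by omega)
      simpa [Nat.succ_sub_succ] using this

private lemma aux_diffAt_iter {Ω : Set ℝ} (hΩ : IsOpen Ω) {k i : ℕ} (hik : i < k) {f : ℝ → ℝ}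
    (hf : ContDiffOn ℝ k f Ω) {x : ℝ} (hx : x ∈ Ω) :
    DifferentiableAt ℝ (deriv^[i] f) x := by
  have h := aux_contDiffOn_iter hΩ hf i (le_of_lt hik)
  have h2 : DifferentiableOn ℝ (deriv^[i] f) Ω := by
    apply h.differentiableOn
    exact_mod_cast (show k - i ≠ 0 by omega)
  exact (h2 x hx).differentiableAt (hΩ.mem_nhds hx)

private lemma aux_iter_deriv_sub_monomial {Ω : Set ℝ} (hΩ : IsOpen Ω) {k : ℕ} {f : ℝ → ℝ}
    (hf : ContDiffOn ℝ k f Ω) (a c : ℝ) (m : ℕ) :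
    ∀ i ≤ k, ∀ x ∈ Ω, deriv^[i] (fun y => f y - a * (y - c) ^ m) x
      = deriv^[i] f x - (a * m.descFactorial i) * (x - c) ^ (m - i) := by
  intro i
  induction i with
  | zero => intro _ x _; simp
  | succ i ih =>
    intro hi x hx
    rw [Function.iterate_succ_apply', Function.iterate_succ_apply']
    have hev : deriv^[i] (fun y => f y - a * (y - c) ^ m)
        =ᶠ[𝓝 x] fun z => deriv^[i] f z - (a * m.descFactorial i) * (z - c) ^ (m - i) := by
      filter_upwards [hΩ.mem_nhds hx] with z hz
      exact ih (by omega) z hz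
    rw [hev.deriv_eq]
    have hdf : DifferentiableAt ℝ (deriv^[i] f) x := aux_diffAt_iter hΩ (by omega) hf hx
    have hdm : DifferentiableAt ℝ (fun z : ℝ => (a * m.descFactorial i) * (z - c) ^ (m - i)) x := by
      fun_prop
    erw [deriv_sub hdf hdm, congrFun (aux_deriv_monomial (a * m.descFactorial i) c (m - i)) x]
    rw [Nat.descFactorial_succ, Nat.sub_sub]
    push_cast
    ring

private lemma aux_glue {Ω : Set ℝ} (hΩ : IsOpen Ω) (x₀ : ℝ) (hx₀ : x₀ ∈ Ω) :
    ∀ (k : ℕ) (r : ℝ → ℝ), ContDiffOn ℝ k r Ω → (∀ i ≤ k, deriv^[i] r x₀ = 0) →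
    ContDiffOn ℝ k (fun y => if x₀ ≤ y then r y else 0) Ω := by
  intro k
  induction k with
  | zero =>
    intro r hr hflat
    have hr0 : r x₀ = 0 := by simpa using hflat 0 le_rfl
    rw [show ((0:ℕ) : WithTop ℕ∞) = 0 by rfl, contDiffOn_zero] at hr ⊢
    intro y hy
    rcases lt_trichotomy y x₀ with h | h | h
    · apply ContinuousAt.continuousWithinAt
      apply ContinuousAt.congr_of_eventuallyEq (continuousAt_const (y := (0:ℝ)))
      filter_upwards [Iio_mem_nhds h] with z hz
      simp [not_le.2 (mem_Iio.1 hz)]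
    · subst h
      apply ContinuousAt.continuousWithinAt
      have hbound : ∀ z, ‖if y ≤ z then r z else 0‖ ≤ ‖r z‖ := by
        intro z; by_cases hz : y ≤ z <;> simp [hz]
      have hrc : Tendsto (fun z => ‖r z‖) (𝓝 y) (𝓝 0) := by
        have := ((hr.continuousAt (hΩ.mem_nhds hy)).norm).tendsto
        simpa [hr0] using this
      have : Tendsto (fun z => if y ≤ z then r z else 0) (𝓝 y) (𝓝 0) :=
        squeeze_zero_norm hbound hrc
      rw [ContinuousAt]
      simpa [hr0] using this
    · apply ContinuousAt.continuousWithinAt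
      apply ContinuousAt.congr_of_eventuallyEq (hr.continuousAt (hΩ.mem_nhds hy))
      filter_upwards [Ioi_mem_nhds h] with z hz
      simp [le_of_lt (mem_Ioi.1 hz)]
  | succ k ih =>
    intro r hr hflat
    set g : ℝ → ℝ := fun y => if x₀ ≤ y then r y else 0 with hg
    have hr0 : r x₀ = 0 := by simpa using hflat 0 (by omega)
    have hr1 : deriv r x₀ = 0 := by simpa using hflat 1 (by omega)
    have hrdiff : ∀ y ∈ Ω, DifferentiableAt ℝ r y := by
      intro y hy
      have : DifferentiableOn ℝ r Ω :=
        hr.differentiableOn (by exact_mod_cast not_false)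
      exact (this y hy).differentiableAt (hΩ.mem_nhds hy)
    have hdiff : ∀ y ∈ Ω, HasDerivAt g (if x₀ ≤ y then deriv r y else 0) y := by
      intro y hy
      rcases lt_trichotomy y x₀ with h | h | h
      · rw [if_neg (not_le.2 h)]
        apply HasDerivAt.congr_of_eventuallyEq (hasDerivAt_const y 0)
        filter_upwards [Iio_mem_nhds h] with z hz
        simp [hg, not_le.2 (mem_Iio.1 hz)]
      · subst h
        rw [if_pos le_rfl, hr1]
        have hder : HasDerivAt r 0 y := by
          have := (hrdiff y hy).hasDerivAt
          rwa [hr1] at this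
        rw [hasDerivAt_iff_isLittleO]
        have h1 := hasDerivAt_iff_isLittleO.1 hder
        simp only [hr0, smul_zero, sub_zero] at h1 ⊢
        have hO : (fun z => g z) =O[𝓝 y] (fun z => r z) := by
          apply isBigO_of_le
          intro z; by_cases hz : y ≤ z <;> simp [hg, hz]
        have hgy : g y = 0 := by simp [hg, hr0]
        simpa [hgy] using hO.trans_isLittleO h1
      · rw [if_pos (le_of_lt h)]
        apply HasDerivAt.congr_of_eventuallyEq (hrdiff y hy).hasDerivAt
        filter_upwards [Ioi_mem_nhds h] with z hz
        simp [hg, le_of_lt (mem_Ioi.1 hz)]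
    have hkey : ContDiffOn ℝ k (fun y => if x₀ ≤ y then deriv r y else 0) Ω := by
      apply ih (deriv r)
      · apply hr.deriv_of_isOpen hΩ
        exact_mod_cast le_of_eq (by push_cast; ring)
      · intro i hi
        rw [← Function.iterate_succ_apply]
        exact hflat (i+1) (by omega)
    rw [show ((k+1:ℕ) : WithTop ℕ∞) = (k : WithTop ℕ∞) + 1 by push_cast; rfl,
      contDiffOn_succ_iff_deriv_of_isOpen hΩ]
    refine ⟨fun y hy => ((hdiff y hy).differentiableAt).differentiableWithinAt, by simp, ?_⟩
    apply hkey.congr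
    intro y hy
    exact (hdiff y hy).deriv

/-- If a linear (additive and ℝ-homogeneous) operator
`D : C^k(Ω) → C(Ω)` satisfies the single-function identity
`D(f³) − 3·f·D(f²) + 3·f²·D(f) = 0` for all `f ∈ C^k(Ω)`, then there are continuous
functions `c₁, c₂ : Ω → ℝ` with `D(f)(x) = c₁(x)·f'(x) + c₂(x)·f''(x)` for all
`f ∈ C^k(Ω)`, `x ∈ Ω`; moreover for `k = 0` one has `c₁ = c₂ = 0` (i.e. `D = 0` on `Ω`),
and for `k = 1` one has `c₂ = 0`.  (The statement is formulated for every nonnegative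
integer `k`, the clauses for `k = 0` and `k = 1` being recorded as implications.) -/
theorem statement17 (k : ℕ) (Ω : Set ℝ) (hΩ : IsOpen Ω) (hΩne : Ω.Nonempty)
    (D : (ℝ → ℝ) → (ℝ → ℝ))
    (hmap : ∀ f : ℝ → ℝ, ContDiffOn ℝ k f Ω → ContinuousOn (D f) Ω)
    (hadd : ∀ f g : ℝ → ℝ, ContDiffOn ℝ k f Ω → ContDiffOn ℝ k g Ω →
      ∀ x ∈ Ω, D (fun y => f y + g y) x = D f x + D g x)
    (hsmul : ∀ (a : ℝ) (f : ℝ → ℝ), ContDiffOn ℝ k f Ω →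
      ∀ x ∈ Ω, D (fun y => a * f y) x = a * D f x)
    (hpow : ∀ f : ℝ → ℝ, ContDiffOn ℝ k f Ω →
      ∀ x ∈ Ω,
        D (fun y => f y ^ 3) x - 3 * f x * D (fun y => f y ^ 2) x
          + 3 * f x ^ 2 * D f x = 0) :
    ∃ c₁ c₂ : ℝ → ℝ,
      ContinuousOn c₁ Ω ∧ ContinuousOn c₂ Ω ∧
      (∀ f : ℝ → ℝ, ContDiffOn ℝ k f Ω → ∀ x ∈ Ω,
        D f x = c₁ x * deriv f x + c₂ x * deriv (deriv f) x) ∧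
      (k = 0 → c₁ = 0 ∧ c₂ = 0) ∧
      (k = 1 → c₂ = 0) := by
  classical
  -- basic linearity helper
  have Dcons : ∀ (c : ℝ) (m R : ℝ → ℝ), ContDiffOn ℝ k m Ω → ContDiffOn ℝ k R Ω → ∀ x ∈ Ω,
      D (fun y => c * m y + R y) x = c * D m x + D R x := by
    intro c m R hm hR x hx
    have h1 := hadd (fun y => c * m y) R (by fun_prop) hR x hx
    have h2 := hsmul c m hm x hx
    simpa [h2] using h1
  -- D of constants
  have Done : ∀ x ∈ Ω, D (fun _ => (1:ℝ)) x = 0 := by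
    intro x hx
    have h := hpow (fun _ => (1:ℝ)) contDiffOn_const x hx
    simp only [one_pow] at h
    linarith [h]
  have Dconst : ∀ (c : ℝ), ∀ x ∈ Ω, D (fun _ => c) x = 0 := by
    intro c x hx
    have h := hsmul c (fun _ => (1:ℝ)) contDiffOn_const x hx
    simp only [mul_one] at h
    rw [h, Done x hx, mul_zero]
  -- kill products of three functions vanishing at a point
  have hm3 : ∀ (f g h : ℝ → ℝ), ContDiffOn ℝ k f Ω → ContDiffOn ℝ k g Ω →
      ContDiffOn ℝ k h Ω → ∀ x ∈ Ω, f x = 0 → g x = 0 → h x = 0 →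
      D (fun y => f y * g y * h y) x = 0 := by
    intro f g h hf hg hh x hx hfx hgx hhx
    have expand : ∀ ε δ : ℝ, D (fun y => (ε * f y + δ * g y + h y)^3) x =
        ε^3 * D (fun y => f y * f y * f y) x
        + (3*ε^2*δ) * D (fun y => f y * f y * g y) x
        + (3*ε^2) * D (fun y => f y * f y * h y) x
        + (3*ε*δ^2) * D (fun y => f y * g y * g y) x
        + (6*ε*δ) * D (fun y => f y * g y * h y) x
        + (3*ε) * D (fun y => f y * h y * h y) x
        + δ^3 * D (fun y => g y * g y * g y) x
        + (3*δ^2) * D (fun y => g y * g y * h y) x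
        + (3*δ) * D (fun y => g y * h y * h y) x
        + D (fun y => h y * h y * h y) x := by
      intro ε δ
      have e0 : (fun y => (ε * f y + δ * g y + h y)^3) = (fun y : ℝ => (ε^3) * (f y * f y * f y) + ((3*ε^2*δ) * (f y * f y * g y) + ((3*ε^2) * (f y * f y * h y) + ((3*ε*δ^2) * (f y * g y * g y) + ((6*ε*δ) * (f y * g y * h y) + ((3*ε) * (f y * h y * h y) + ((δ^3) * (g y * g y * g y) + ((3*δ^2) * (g y * g y * h y) + ((3*δ) * (g y * h y * h y) + ((1:ℝ) * (h y * h y * h y))))))))))) := by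
        funext y; ring
      have s0 : D (fun y : ℝ => (ε^3) * (f y * f y * f y) + ((3*ε^2*δ) * (f y * f y * g y) + ((3*ε^2) * (f y * f y * h y) + ((3*ε*δ^2) * (f y * g y * g y) + ((6*ε*δ) * (f y * g y * h y) + ((3*ε) * (f y * h y * h y) + ((δ^3) * (g y * g y * g y) + ((3*δ^2) * (g y * g y * h y) + ((3*δ) * (g y * h y * h y) + ((1:ℝ) * (h y * h y * h y))))))))))) x
          = (ε^3) * D (fun y : ℝ => f y * f y * f y) x + D (fun y : ℝ => (3*ε^2*δ) * (f y * f y * g y) + ((3*ε^2) * (f y * f y * h y) + ((3*ε*δ^2) * (f y * g y * g y) + ((6*ε*δ) * (f y * g y * h y) + ((3*ε) * (f y * h y * h y) + ((δ^3) * (g y * g y * g y) + ((3*δ^2) * (g y * g y * h y) + ((3*δ) * (g y * h y * h y) + ((1:ℝ) * (h y * h y * h y)))))))))) x :=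
        Dcons _ _ _ (by fun_prop) (by fun_prop) x hx
      have s1 : D (fun y : ℝ => (3*ε^2*δ) * (f y * f y * g y) + ((3*ε^2) * (f y * f y * h y) + ((3*ε*δ^2) * (f y * g y * g y) + ((6*ε*δ) * (f y * g y * h y) + ((3*ε) * (f y * h y * h y) + ((δ^3) * (g y * g y * g y) + ((3*δ^2) * (g y * g y * h y) + ((3*δ) * (g y * h y * h y) + ((1:ℝ) * (h y * h y * h y)))))))))) x
          = (3*ε^2*δ) * D (fun y : ℝ => f y * f y * g y) x + D (fun y : ℝ => (3*ε^2) * (f y * f y * h y) + ((3*ε*δ^2) * (f y * g y * g y) + ((6*ε*δ) * (f y * g y * h y) + ((3*ε) * (f y * h y * h y) + ((δ^3) * (g y * g y * g y) + ((3*δ^2) * (g y * g y * h y) + ((3*δ) * (g y * h y * h y) + ((1:ℝ) * (h y * h y * h y))))))))) x :=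
        Dcons _ _ _ (by fun_prop) (by fun_prop) x hx
      have s2 : D (fun y : ℝ => (3*ε^2) * (f y * f y * h y) + ((3*ε*δ^2) * (f y * g y * g y) + ((6*ε*δ) * (f y * g y * h y) + ((3*ε) * (f y * h y * h y) + ((δ^3) * (g y * g y * g y) + ((3*δ^2) * (g y * g y * h y) + ((3*δ) * (g y * h y * h y) + ((1:ℝ) * (h y * h y * h y))))))))) x
          = (3*ε^2) * D (fun y : ℝ => f y * f y * h y) x + D (fun y : ℝ => (3*ε*δ^2) * (f y * g y * g y) + ((6*ε*δ) * (f y * g y * h y) + ((3*ε) * (f y * h y * h y) + ((δ^3) * (g y * g y * g y) + ((3*δ^2) * (g y * g y * h y) + ((3*δ) * (g y * h y * h y) + ((1:ℝ) * (h y * h y * h y)))))))) x :=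
        Dcons _ _ _ (by fun_prop) (by fun_prop) x hx
      have s3 : D (fun y : ℝ => (3*ε*δ^2) * (f y * g y * g y) + ((6*ε*δ) * (f y * g y * h y) + ((3*ε) * (f y * h y * h y) + ((δ^3) * (g y * g y * g y) + ((3*δ^2) * (g y * g y * h y) + ((3*δ) * (g y * h y * h y) + ((1:ℝ) * (h y * h y * h y)))))))) x
          = (3*ε*δ^2) * D (fun y : ℝ => f y * g y * g y) x + D (fun y : ℝ => (6*ε*δ) * (f y * g y * h y) + ((3*ε) * (f y * h y * h y) + ((δ^3) * (g y * g y * g y) + ((3*δ^2) * (g y * g y * h y) + ((3*δ) * (g y * h y * h y) + ((1:ℝ) * (h y * h y * h y))))))) x :=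
        Dcons _ _ _ (by fun_prop) (by fun_prop) x hx
      have s4 : D (fun y : ℝ => (6*ε*δ) * (f y * g y * h y) + ((3*ε) * (f y * h y * h y) + ((δ^3) * (g y * g y * g y) + ((3*δ^2) * (g y * g y * h y) + ((3*δ) * (g y * h y * h y) + ((1:ℝ) * (h y * h y * h y))))))) x
          = (6*ε*δ) * D (fun y : ℝ => f y * g y * h y) x + D (fun y : ℝ => (3*ε) * (f y * h y * h y) + ((δ^3) * (g y * g y * g y) + ((3*δ^2) * (g y * g y * h y) + ((3*δ) * (g y * h y * h y) + ((1:ℝ) * (h y * h y * h y)))))) x :=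
        Dcons _ _ _ (by fun_prop) (by fun_prop) x hx
      have s5 : D (fun y : ℝ => (3*ε) * (f y * h y * h y) + ((δ^3) * (g y * g y * g y) + ((3*δ^2) * (g y * g y * h y) + ((3*δ) * (g y * h y * h y) + ((1:ℝ) * (h y * h y * h y)))))) x
          = (3*ε) * D (fun y : ℝ => f y * h y * h y) x + D (fun y : ℝ => (δ^3) * (g y * g y * g y) + ((3*δ^2) * (g y * g y * h y) + ((3*δ) * (g y * h y * h y) + ((1:ℝ) * (h y * h y * h y))))) x :=
        Dcons _ _ _ (by fun_prop) (by fun_prop) x hx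
      have s6 : D (fun y : ℝ => (δ^3) * (g y * g y * g y) + ((3*δ^2) * (g y * g y * h y) + ((3*δ) * (g y * h y * h y) + ((1:ℝ) * (h y * h y * h y))))) x
          = (δ^3) * D (fun y : ℝ => g y * g y * g y) x + D (fun y : ℝ => (3*δ^2) * (g y * g y * h y) + ((3*δ) * (g y * h y * h y) + ((1:ℝ) * (h y * h y * h y)))) x :=
        Dcons _ _ _ (by fun_prop) (by fun_prop) x hx
      have s7 : D (fun y : ℝ => (3*δ^2) * (g y * g y * h y) + ((3*δ) * (g y * h y * h y) + ((1:ℝ) * (h y * h y * h y)))) x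
          = (3*δ^2) * D (fun y : ℝ => g y * g y * h y) x + D (fun y : ℝ => (3*δ) * (g y * h y * h y) + ((1:ℝ) * (h y * h y * h y))) x :=
        Dcons _ _ _ (by fun_prop) (by fun_prop) x hx
      have s8 : D (fun y : ℝ => (3*δ) * (g y * h y * h y) + ((1:ℝ) * (h y * h y * h y))) x
          = (3*δ) * D (fun y : ℝ => g y * h y * h y) x + D (fun y : ℝ => (1:ℝ) * (h y * h y * h y)) x :=
        Dcons _ _ _ (by fun_prop) (by fun_prop) x hx
      have s9 : D (fun y : ℝ => (1:ℝ) * (h y * h y * h y)) x = (1:ℝ) * D (fun y : ℝ => h y * h y * h y) x :=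
        hsmul 1 _ (by fun_prop) x hx
      rw [e0, s0, s1, s2, s3, s4, s5, s6, s7, s8, s9]
      ring
    have P : ∀ ε δ : ℝ, D (fun y => (ε * f y + δ * g y + h y)^3) x = 0 := by
      intro ε δ
      have hw := hpow (fun y => ε * f y + δ * g y + h y) (by fun_prop) x hx
      simp only [hfx, hgx, hhx, mul_zero, add_zero, zero_add] at hw
      simpa using hw
    have e1 := (expand 1 1).symm.trans (P 1 1)
    have e2 := (expand 1 (-1)).symm.trans (P 1 (-1))
    have e3 := (expand (-1) 1).symm.trans (P (-1) 1)
    have e4 := (expand (-1) (-1)).symm.trans (P (-1) (-1))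
    linarith [e1, e2, e3, e4]
  -- locality-type vanishing via a smooth cutoff
  have hvanish : ∀ (g0 : ℝ → ℝ), ContDiffOn ℝ k g0 Ω → ∀ y ∈ Ω, ∀ w : ℝ → ℝ,
      ContDiffOn ℝ k w Ω → w y = 0 → (∀ t, g0 t ≠ 0 → w t = 1) → D g0 y = 0 := by
    intro g0 hg0 y hy w hw hwy hw1
    have hkey : D (fun t => w t * w t * (w t * g0 t)) y = 0 :=
      hm3 w w (fun t => w t * g0 t) hw hw (by fun_prop) y hy hwy hwy (by simp [hwy])
    have he : (fun t => w t * w t * (w t * g0 t)) = g0 := by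
      funext t
      by_cases hgt : g0 t = 0
      · simp [hgt]
      · simp [hw1 t hgt]
    rwa [he] at hkey
  -- kill k-flat functions
  have hkill_flat : ∀ (f : ℝ → ℝ), ContDiffOn ℝ k f Ω → ∀ x₀ ∈ Ω,
      (∀ i ≤ k, deriv^[i] f x₀ = 0) → D f x₀ = 0 := by
    intro f hf x₀ hx₀ hflat
    have hg1 : ContDiffOn ℝ k (fun y => if x₀ ≤ y then f y else 0) Ω :=
      aux_glue hΩ x₀ hx₀ k f hf hflat
    have hg2 : ContDiffOn ℝ k (fun y => f y - (if x₀ ≤ y then f y else 0)) Ω := hf.sub hg1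
    have hz1 : D (fun y => if x₀ ≤ y then f y else 0) x₀ = 0 := by
      have hvan : ∀ y ∈ Ω, y < x₀ → D (fun y => if x₀ ≤ y then f y else 0) y = 0 := by
        intro y hy hyx
        apply hvanish _ hg1 y hy (fun t => Real.smoothTransition ((t - y) * (x₀ - y)⁻¹))
        · apply ContDiff.contDiffOn
          apply ContDiff.comp (g := Real.smoothTransition)
          · exact_mod_cast Real.smoothTransition.contDiff (n := (k : ℕ∞))
          · fun_prop
        · simpa using Real.smoothTransition.zero
        · intro t ht
          have hxt : x₀ ≤ t := by
            by_contra hlt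
            exact ht (if_neg hlt)
          apply Real.smoothTransition.one_of_one_le
          rw [← div_eq_mul_inv]
          exact (one_le_div (by linarith)).2 (by linarith)
      have hne : (𝓝[Ω ∩ Iio x₀] x₀).NeBot := by
        have heq : 𝓝[Ω ∩ Iio x₀] x₀ = 𝓝[Iio x₀] x₀ := by
          rw [Set.inter_comm]
          exact nhdsWithin_inter_of_mem' (mem_nhdsWithin_of_mem_nhds (hΩ.mem_nhds hx₀))
        rw [heq]; infer_instance
      have ht1 : Tendsto (D (fun y => if x₀ ≤ y then f y else 0)) (𝓝[Ω ∩ Iio x₀] x₀)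
          (𝓝 (D (fun y => if x₀ ≤ y then f y else 0) x₀)) :=
        ((hmap _ hg1) x₀ hx₀).mono_left (nhdsWithin_mono x₀ inter_subset_left)
      have ht2 : Tendsto (D (fun y => if x₀ ≤ y then f y else 0)) (𝓝[Ω ∩ Iio x₀] x₀) (𝓝 0) := by
        apply Tendsto.congr' _ tendsto_const_nhds
        filter_upwards [self_mem_nhdsWithin] with y hy
        exact (hvan y hy.1 hy.2).symm
      exact tendsto_nhds_unique ht1 ht2
    have hz2 : D (fun y => f y - (if x₀ ≤ y then f y else 0)) x₀ = 0 := by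
      have hvan : ∀ y ∈ Ω, x₀ < y → D (fun y => f y - (if x₀ ≤ y then f y else 0)) y = 0 := by
        intro y hy hyx
        apply hvanish _ hg2 y hy (fun t => Real.smoothTransition ((y - t) * (y - x₀)⁻¹))
        · apply ContDiff.contDiffOn
          apply ContDiff.comp (g := Real.smoothTransition)
          · exact_mod_cast Real.smoothTransition.contDiff (n := (k : ℕ∞))
          · fun_prop
        · simpa using Real.smoothTransition.zero
        · intro t ht
          have hxt : t < x₀ := by
            by_contra hlt
            push_neg at hlt
            exact ht (by rw [if_pos hlt, sub_self])
          apply Real.smoothTransition.one_of_one_le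
          rw [← div_eq_mul_inv]
          exact (one_le_div (by linarith)).2 (by linarith)
      have hne : (𝓝[Ω ∩ Ioi x₀] x₀).NeBot := by
        have heq : 𝓝[Ω ∩ Ioi x₀] x₀ = 𝓝[Ioi x₀] x₀ := by
          rw [Set.inter_comm]
          exact nhdsWithin_inter_of_mem' (mem_nhdsWithin_of_mem_nhds (hΩ.mem_nhds hx₀))
        rw [heq]; infer_instance
      have ht1 : Tendsto (D (fun y => f y - (if x₀ ≤ y then f y else 0))) (𝓝[Ω ∩ Ioi x₀] x₀)
          (𝓝 (D (fun y => f y - (if x₀ ≤ y then f y else 0)) x₀)) :=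
        ((hmap _ hg2) x₀ hx₀).mono_left (nhdsWithin_mono x₀ inter_subset_left)
      have ht2 : Tendsto (D (fun y => f y - (if x₀ ≤ y then f y else 0)))
          (𝓝[Ω ∩ Ioi x₀] x₀) (𝓝 0) := by
        apply Tendsto.congr' _ tendsto_const_nhds
        filter_upwards [self_mem_nhdsWithin] with y hy
        exact (hvan y hy.1 hy.2).symm
      exact tendsto_nhds_unique ht1 ht2
    have hA : D (fun y => (if x₀ ≤ y then f y else 0) + (f y - (if x₀ ≤ y then f y else 0))) x₀
        = D (fun y => if x₀ ≤ y then f y else 0) x₀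
          + D (fun y => f y - (if x₀ ≤ y then f y else 0)) x₀ :=
      hadd _ _ hg1 hg2 x₀ hx₀
    have he : (fun y => (if x₀ ≤ y then f y else 0) + (f y - (if x₀ ≤ y then f y else 0))) = f := by
      funext y; ring
    rw [he] at hA
    rw [hA, hz1, hz2, add_zero]
  -- kill monomials of degree ≥ 3
  have hmon : ∀ (x₀ : ℝ), x₀ ∈ Ω → ∀ m : ℕ, D (fun y => (y - x₀)^(m+3)) x₀ = 0 := by
    intro x₀ hx₀ m
    have hkey : D (fun y => (y - x₀) * (y - x₀) * ((y - x₀)^(m+1))) x₀ = 0 :=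
      hm3 _ _ _ (by fun_prop) (by fun_prop) (by fun_prop) x₀ hx₀ (by simp) (by simp) (by simp)
    have he : (fun y : ℝ => (y - x₀) * (y - x₀) * ((y - x₀)^(m+1)))
        = (fun y : ℝ => (y - x₀)^(m+3)) := by
      funext y; ring
    rwa [he] at hkey
  -- downward induction: kill (k-d)-flat functions as long as k-d ≥ 2
  have hstep : ∀ (d : ℕ), ∀ (f : ℝ → ℝ), ContDiffOn ℝ k f Ω → ∀ x₀ ∈ Ω, 2 ≤ k - d →
      (∀ i ≤ k - d, deriv^[i] f x₀ = 0) → D f x₀ = 0 := by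
    intro d
    induction d with
    | zero =>
      intro f hf x₀ hx₀ _ hflat
      exact hkill_flat f hf x₀ hx₀ (by simpa using hflat)
    | succ d ih =>
      intro f hf x₀ hx₀ h2 hflat
      have hdk : d + 1 < k := by omega
      have hkd : k - d = (k - (d+1)) + 1 := by omega
      have hsub := aux_iter_deriv_sub_monomial hΩ hf
        (deriv^[(k - (d+1))+1] f x₀ / (((k - (d+1)) + 1).factorial : ℝ)) x₀ ((k - (d+1))+1)
      have hCkg : ContDiffOn ℝ k
          (fun y => f y - (deriv^[(k - (d+1))+1] f x₀ / (((k - (d+1)) + 1).factorial : ℝ)) * (y - x₀)^((k - (d+1))+1)) Ω := by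
        fun_prop
      have hflatg : ∀ i ≤ k - d, deriv^[i]
          (fun y => f y - (deriv^[(k - (d+1))+1] f x₀ / (((k - (d+1)) + 1).factorial : ℝ)) * (y - x₀)^((k - (d+1))+1)) x₀ = 0 := by
        intro i hi
        have hik : i ≤ k := by omega
        have hval := hsub i hik x₀ hx₀
        rcases Nat.lt_or_ge i ((k - (d+1))+1) with hij | hij
        · have h0 : ((x₀ - x₀):ℝ)^(((k - (d+1))+1)-i) = 0 := by
            rw [sub_self]; exact zero_pow (by omega)
          rw [hval, h0, mul_zero, sub_zero]
          exact hflat i (by omega)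
        · have hieq : i = (k - (d+1))+1 := by omega
          subst hieq
          rw [hval, Nat.sub_self, pow_zero, mul_one, Nat.descFactorial_self,
            div_mul_cancel₀ _ (by exact_mod_cast Nat.factorial_ne_zero ((k - (d+1)) + 1))]
          exact sub_self _
      have hgz := ih (fun y => f y - (deriv^[(k - (d+1))+1] f x₀ / (((k - (d+1)) + 1).factorial : ℝ)) * (y - x₀)^((k - (d+1))+1))
        hCkg x₀ hx₀ (by omega) hflatg
      have h1 : D (fun y => (f y - (deriv^[(k - (d+1))+1] f x₀ / (((k - (d+1)) + 1).factorial : ℝ)) * (y - x₀)^((k - (d+1))+1))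
            + (deriv^[(k - (d+1))+1] f x₀ / (((k - (d+1)) + 1).factorial : ℝ)) * ((y - x₀)^((k - (d+1))+1))) x₀
          = D (fun y => f y - (deriv^[(k - (d+1))+1] f x₀ / (((k - (d+1)) + 1).factorial : ℝ)) * (y - x₀)^((k - (d+1))+1)) x₀
            + D (fun y => (deriv^[(k - (d+1))+1] f x₀ / (((k - (d+1)) + 1).factorial : ℝ)) * ((y - x₀)^((k - (d+1))+1))) x₀ :=
        hadd _ _ hCkg (by fun_prop) x₀ hx₀
      have h2' : D (fun y => (deriv^[(k - (d+1))+1] f x₀ / (((k - (d+1)) + 1).factorial : ℝ)) * ((y - x₀)^((k - (d+1))+1))) x₀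
          = (deriv^[(k - (d+1))+1] f x₀ / (((k - (d+1)) + 1).factorial : ℝ)) * D (fun y => (y - x₀)^((k - (d+1))+1)) x₀ :=
        hsmul _ _ (by fun_prop) x₀ hx₀
      have h3 : D (fun y => (y - x₀)^((k - (d+1))+1)) x₀ = 0 := by
        obtain ⟨m, hm⟩ : ∃ m, (k - (d+1))+1 = m + 3 := ⟨k - (d+1) - 2, by omega⟩
        rw [hm]
        exact hmon x₀ hx₀ m
      have he : (fun y => (f y - (deriv^[(k - (d+1))+1] f x₀ / (((k - (d+1)) + 1).factorial : ℝ)) * (y - x₀)^((k - (d+1))+1))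
            + (deriv^[(k - (d+1))+1] f x₀ / (((k - (d+1)) + 1).factorial : ℝ)) * ((y - x₀)^((k - (d+1))+1))) = f := by
        funext y; ring
      rw [he] at h1
      rw [h1, h2', h3, hgz]; ring
  -- kill 2-flat functions
  have hkill2 : ∀ (f : ℝ → ℝ), ContDiffOn ℝ k f Ω → ∀ x₀ ∈ Ω, f x₀ = 0 →
      (1 ≤ k → deriv f x₀ = 0) → (2 ≤ k → deriv (deriv f) x₀ = 0) → D f x₀ = 0 := by
    intro f hf x₀ hx₀ h0 h1 h2
    have hit : ∀ i, i ≤ 2 → i ≤ k → deriv^[i] f x₀ = 0 := by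
      intro i hi2 hik
      interval_cases i
      · simpa using h0
      · simpa using h1 (by omega)
      · have hee : deriv^[2] f x₀ = deriv (deriv f) x₀ := by
          rw [show (2:ℕ) = 1 + 1 from rfl, Function.iterate_succ_apply', Function.iterate_one]
        rw [hee]; exact h2 (by omega)
    rcases Nat.lt_or_ge k 3 with hk | hk
    · exact hkill_flat f hf x₀ hx₀ (fun i hik => hit i (by omega) hik)
    · exact hstep (k - 2) f hf x₀ hx₀ (by omega) (fun i hi => hit i (by omega) (by omega))
  -- the candidate coefficient functions
  refine ⟨(if k = 0 then 0 else D (fun y => y)),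
    (if 2 ≤ k then (fun x => (D (fun y => y^2) x - 2*x*D (fun y => y) x)/2) else 0),
    ?_, ?_, ?_, ?_, ?_⟩
  · by_cases hk0 : k = 0
    · simp only [if_pos hk0]; exact continuousOn_const
    · simp only [if_neg hk0]; exact hmap _ (by fun_prop)
  · by_cases hk2 : 2 ≤ k
    · simp only [if_pos hk2]
      exact ((hmap _ (by fun_prop)).sub
        ((continuousOn_const.mul continuousOn_id).mul (hmap _ (by fun_prop)))).div_const 2
  -- main formula
    · simp only [if_neg hk2]; exact continuousOn_const
  · intro f hf x₀ hx₀
    rcases Nat.eq_zero_or_pos k with hk0 | hkpos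
    · have hnk2 : ¬ 2 ≤ k := by omega
      simp only [if_pos hk0, if_neg hnk2, Pi.zero_apply, zero_mul, add_zero]
      have hg : D (fun y => f y - f x₀) x₀ = 0 := by
        apply hkill2 (fun y => f y - f x₀) (by fun_prop) x₀ hx₀ (by ring)
        · intro h; omega
        · intro h; omega
      have h1 : D (fun y => (f y - f x₀) + f x₀) x₀
          = D (fun y => f y - f x₀) x₀ + D (fun _ => f x₀) x₀ :=
        hadd _ _ (by fun_prop) contDiffOn_const x₀ hx₀
      have he : (fun y => (f y - f x₀) + f x₀) = f := by funext y; ring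
      rw [he] at h1
      rw [h1, hg, Dconst (f x₀) x₀ hx₀, add_zero]
    · -- k ≥ 1
      have hfd : ∀ y ∈ Ω, DifferentiableAt ℝ f y := by
        intro y hy
        have hd : DifferentiableOn ℝ f Ω := hf.differentiableOn (by exact_mod_cast hkpos.ne')
        exact (hd y hy).differentiableAt (hΩ.mem_nhds hy)
      have hg0 : (fun y => f y - f x₀ - deriv f x₀ * (y - x₀)
          - (if 2 ≤ k then deriv (deriv f) x₀ else 0)/2 * (y - x₀)^2) x₀ = 0 := by
        simp
      have hg1 : deriv (fun y => f y - f x₀ - deriv f x₀ * (y - x₀)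
          - (if 2 ≤ k then deriv (deriv f) x₀ else 0)/2 * (y - x₀)^2) x₀ = 0 := by
        have h1 : HasDerivAt (fun y : ℝ => deriv f x₀ * (y - x₀)) (deriv f x₀ * 1) x₀ :=
          ((hasDerivAt_id x₀).sub_const x₀).const_mul (deriv f x₀)
        have h2 : HasDerivAt (fun y : ℝ => (if 2 ≤ k then deriv (deriv f) x₀ else 0)/2 * (y - x₀)^2)
            ((if 2 ≤ k then deriv (deriv f) x₀ else 0)/2 * (((2:ℕ)) * (x₀ - x₀)^(2-1) * 1)) x₀ :=
          (((hasDerivAt_id x₀).sub_const x₀).pow 2).const_mul _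
        have hg' := (((hfd x₀ hx₀).hasDerivAt.sub_const (f x₀)).sub h1).sub h2
        erw [hg'.deriv]
        simp
      have hg2 : 2 ≤ k → deriv (deriv (fun y => f y - f x₀ - deriv f x₀ * (y - x₀)
          - (if 2 ≤ k then deriv (deriv f) x₀ else 0)/2 * (y - x₀)^2)) x₀ = 0 := by
        intro hk2
        have hev : deriv (fun y => f y - f x₀ - deriv f x₀ * (y - x₀)
            - (if 2 ≤ k then deriv (deriv f) x₀ else 0)/2 * (y - x₀)^2)
            =ᶠ[𝓝 x₀] (fun y => deriv f y - deriv f x₀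
              - (if 2 ≤ k then deriv (deriv f) x₀ else 0) * (y - x₀)) := by
          filter_upwards [hΩ.mem_nhds hx₀] with y hy
          have h1y : HasDerivAt (fun z : ℝ => deriv f x₀ * (z - x₀)) (deriv f x₀ * 1) y :=
            ((hasDerivAt_id y).sub_const x₀).const_mul (deriv f x₀)
          have h2y : HasDerivAt (fun z : ℝ => (if 2 ≤ k then deriv (deriv f) x₀ else 0)/2 * (z - x₀)^2)
              ((if 2 ≤ k then deriv (deriv f) x₀ else 0)/2 * (((2:ℕ)) * (y - x₀)^(2-1) * 1)) y :=
            (((hasDerivAt_id y).sub_const x₀).pow 2).const_mul _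
          have hgy := (((hfd y hy).hasDerivAt.sub_const (f x₀)).sub h1y).sub h2y
          erw [hgy.deriv]
          push_cast
          ring
        rw [hev.deriv_eq]
        have hdd : DifferentiableAt ℝ (deriv f) x₀ := by
          have := aux_diffAt_iter hΩ (show 1 < k by omega) hf hx₀ (i := 1)
          simpa using this
        have h3 : HasDerivAt (fun y : ℝ => (if 2 ≤ k then deriv (deriv f) x₀ else 0) * (y - x₀))
            ((if 2 ≤ k then deriv (deriv f) x₀ else 0) * 1) x₀ :=
          ((hasDerivAt_id x₀).sub_const x₀).const_mul _
        have hgy2 := (hdd.hasDerivAt.sub_const (deriv f x₀)).sub h3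
        erw [hgy2.deriv, if_pos hk2]
        ring
      have hDg : D (fun y => f y - f x₀ - deriv f x₀ * (y - x₀)
          - (if 2 ≤ k then deriv (deriv f) x₀ else 0)/2 * (y - x₀)^2) x₀ = 0 :=
        hkill2 _ (by fun_prop) x₀ hx₀ hg0 (fun _ => hg1) hg2
      -- split f
      have hs1 : D (fun y => (f y - f x₀ - deriv f x₀ * (y - x₀)
            - (if 2 ≤ k then deriv (deriv f) x₀ else 0)/2 * (y - x₀)^2)
            + ((f x₀) * 1 + (deriv f x₀ * (y - x₀)
              + ((if 2 ≤ k then deriv (deriv f) x₀ else 0)/2) * ((y - x₀)^2)))) x₀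
          = D (fun y => f y - f x₀ - deriv f x₀ * (y - x₀)
            - (if 2 ≤ k then deriv (deriv f) x₀ else 0)/2 * (y - x₀)^2) x₀
            + D (fun y => (f x₀) * 1 + (deriv f x₀ * (y - x₀)
              + ((if 2 ≤ k then deriv (deriv f) x₀ else 0)/2) * ((y - x₀)^2))) x₀ :=
        hadd _ _ (by fun_prop) (by fun_prop) x₀ hx₀
      have hq0 : D (fun y : ℝ => (f x₀) * 1 + (deriv f x₀ * (y - x₀)
            + ((if 2 ≤ k then deriv (deriv f) x₀ else 0)/2) * ((y - x₀)^2))) x₀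
          = (f x₀) * D (fun _ : ℝ => (1:ℝ)) x₀ + D (fun y : ℝ => deriv f x₀ * (y - x₀)
            + ((if 2 ≤ k then deriv (deriv f) x₀ else 0)/2) * ((y - x₀)^2)) x₀ :=
        Dcons _ _ _ contDiffOn_const (by fun_prop) x₀ hx₀
      have hq1 : D (fun y : ℝ => deriv f x₀ * (y - x₀)
            + ((if 2 ≤ k then deriv (deriv f) x₀ else 0)/2) * ((y - x₀)^2)) x₀
          = deriv f x₀ * D (fun y : ℝ => y - x₀) x₀
            + D (fun y : ℝ => ((if 2 ≤ k then deriv (deriv f) x₀ else 0)/2) * ((y - x₀)^2)) x₀ :=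
        Dcons _ _ _ (by fun_prop) (by fun_prop) x₀ hx₀
      have hq2 : D (fun y : ℝ => ((if 2 ≤ k then deriv (deriv f) x₀ else 0)/2) * ((y - x₀)^2)) x₀
          = ((if 2 ≤ k then deriv (deriv f) x₀ else 0)/2) * D (fun y : ℝ => (y - x₀)^2) x₀ :=
        hsmul _ _ (by fun_prop) x₀ hx₀
      have hv1 : D (fun y : ℝ => y - x₀) x₀ = D (fun y : ℝ => y) x₀ := by
        have h := Dcons (-x₀) (fun _ : ℝ => (1:ℝ)) (fun y : ℝ => y) contDiffOn_const
          (by fun_prop) x₀ hx₀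
        have he2 : (fun y : ℝ => (-x₀) * 1 + y) = (fun y : ℝ => y - x₀) := by funext y; ring
        rw [show (fun y : ℝ => (-x₀) * (fun _ : ℝ => (1:ℝ)) y + (fun y : ℝ => y) y)
          = (fun y : ℝ => (-x₀) * 1 + y) from rfl, he2] at h
        rw [h, Done x₀ hx₀]; ring
      have hv2 : D (fun y : ℝ => (y - x₀)^2) x₀
          = D (fun y : ℝ => y^2) x₀ - 2*x₀*D (fun y : ℝ => y) x₀ := by
        have ha1 : D (fun y : ℝ => (x₀^2) * 1 + ((-(2*x₀)) * y + (1:ℝ) * (y^2))) x₀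
            = (x₀^2) * D (fun _ : ℝ => (1:ℝ)) x₀
              + D (fun y : ℝ => (-(2*x₀)) * y + (1:ℝ) * (y^2)) x₀ :=
          Dcons _ _ _ contDiffOn_const (by fun_prop) x₀ hx₀
        have ha2 : D (fun y : ℝ => (-(2*x₀)) * y + (1:ℝ) * (y^2)) x₀
            = (-(2*x₀)) * D (fun y : ℝ => y) x₀ + D (fun y : ℝ => (1:ℝ) * (y^2)) x₀ :=
          Dcons _ _ _ (by fun_prop) (by fun_prop) x₀ hx₀
        have ha3 : D (fun y : ℝ => (1:ℝ) * (y^2)) x₀ = 1 * D (fun y : ℝ => y^2) x₀ :=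
          hsmul 1 _ (by fun_prop) x₀ hx₀
        have he2 : (fun y : ℝ => (x₀^2) * 1 + ((-(2*x₀)) * y + (1:ℝ) * (y^2)))
            = (fun y : ℝ => (y - x₀)^2) := by funext y; ring
        rw [he2] at ha1
        rw [ha1, ha2, ha3, Done x₀ hx₀]; ring
      have he : (fun y => (f y - f x₀ - deriv f x₀ * (y - x₀)
            - (if 2 ≤ k then deriv (deriv f) x₀ else 0)/2 * (y - x₀)^2)
            + ((f x₀) * 1 + (deriv f x₀ * (y - x₀)
              + ((if 2 ≤ k then deriv (deriv f) x₀ else 0)/2) * ((y - x₀)^2)))) = f := by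
        funext y; ring
      have hfinal : D f x₀ = deriv f x₀ * D (fun y : ℝ => y) x₀
          + ((if 2 ≤ k then deriv (deriv f) x₀ else 0)/2)
            * (D (fun y : ℝ => y^2) x₀ - 2*x₀*D (fun y : ℝ => y) x₀) := by
        conv_lhs => rw [← he]
        rw [hs1, hDg, hq0, hq1, hq2, Done x₀ hx₀, hv1, hv2]
        ring
      have hnk0 : ¬ k = 0 := by omega
      by_cases hk2 : 2 ≤ k
      · simp only [if_neg hnk0, if_pos hk2] at hfinal ⊢
        rw [hfinal]; ring
      · simp only [if_neg hnk0, if_neg hk2, Pi.zero_apply, zero_mul, add_zero] at hfinal ⊢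
        rw [hfinal]; ring
  · intro hk0
    have hnk2 : ¬ 2 ≤ k := by omega
    constructor
    · simp only [if_pos hk0]
    · simp only [if_neg hnk2]
  · intro hk1
    have hnk2 : ¬ 2 ≤ k := by omega
    simp only [if_neg hnk2]
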